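/- A nondegenerate local minimizer x* of φ (grad φ(x*) = 0 and all H ∈ ∂grad φ(x*) positive definite) is an isolated stationary point: there is a neighborhood U of x* in which x* is the only point where grad φ vanishes. -/
import Mathlib


open scoped RealInnerProductSpace

/-- a nondegenerate local minimizer `xs` of `φ` (gradient vanishes, all
elements of the Clarke generalized covariant derivative `Dgrad xs` positive definite)
is an isolated stationary point.  The mean-value form of Taylor's theorem along the
geodesic from `xs` to `x` is supplied as hypothesis `hTaylor` (with tangent spaces
identified with `E` via parallel transport, which is an isometry). -/
theorem stmt_8
    {E : Type*} [NormedAddCommGroup E] [InnerProductSpace ℝ E] [FiniteDimensional ℝ E]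
    {M : Type*} [MetricSpace M]
    (grad : M → E) (Dgrad : M → Set (E →L[ℝ] E)) (xs : M)
    (hgrad0 : grad xs = 0)
    (hne : (Dgrad xs).Nonempty)
    (hcompact : IsCompact (Dgrad xs))
    (hsym : ∀ x : M, ∀ H ∈ Dgrad x, ∀ u v : E, ⟪H u, v⟫ = ⟪u, H v⟫)
    (hposdef : ∀ H ∈ Dgrad xs, ∀ ξ : E, ξ ≠ 0 → 0 < ⟪ξ, H ξ⟫)
    (husc : ∀ ε > 0, ∃ δ > 0, ∀ x ∈ Metric.ball xs δ, ∀ H ∈ Dgrad x,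
      ∃ H' ∈ Dgrad xs, ‖H - H'‖ ≤ ε)
    (δT : ℝ) (hδT : 0 < δT)
    (hTaylor : ∀ x ∈ Metric.ball xs δT, ∃ y : M, ∃ H ∈ Dgrad y, ∃ v : E,
      dist xs y ≤ dist xs x ∧ ‖v‖ = dist xs x ∧ ‖grad x‖ = ‖H v‖) :
    ∃ U ∈ nhds xs, ∀ x ∈ U, grad x = 0 → x = xs := by
  by_cases htriv : ∀ v : E, v = 0
  · refine ⟨Metric.ball xs δT, Metric.ball_mem_nhds xs hδT, ?_⟩
    intro x hx _
    obtain ⟨y, H, hH, v, hdy, hv, hgv⟩ := hTaylor x hx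
    have : dist xs x = 0 := by rw [← hv, htriv v, norm_zero]
    exact (eq_of_dist_eq_zero (by rwa [dist_comm] at this))
  push_neg at htriv
  obtain ⟨ξ₀, hξ₀⟩ := htriv
  -- uniform positive-definiteness constant μ
  have hsph : (Metric.sphere (0 : E) 1).Nonempty :=
    ⟨‖ξ₀‖⁻¹ • ξ₀, by simp [norm_smul, norm_ne_zero_iff.mpr hξ₀,
      inv_mul_cancel₀ (norm_ne_zero_iff.mpr hξ₀)]⟩
  have hK : IsCompact ((Dgrad xs) ×ˢ Metric.sphere (0 : E) 1) :=
    hcompact.prod (isCompact_sphere 0 1)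
  have hKne : ((Dgrad xs) ×ˢ Metric.sphere (0 : E) 1).Nonempty := hne.prod hsph
  have hcont : Continuous fun p : (E →L[ℝ] E) × E => ⟪p.2, p.1 p.2⟫ :=
    Continuous.inner continuous_snd (continuous_fst.clm_apply continuous_snd)
  obtain ⟨p₀, hp₀K, hp₀min⟩ := hK.exists_isMinOn hKne hcont.continuousOn
  set μ : ℝ := ⟪p₀.2, p₀.1 p₀.2⟫ with hμdef
  have hμpos : 0 < μ := by
    have hp2 : p₀.2 ≠ 0 := by
      have : ‖p₀.2‖ = 1 := by simpa using hp₀K.2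
      intro h; rw [h, norm_zero] at this; norm_num at this
    exact hposdef p₀.1 hp₀K.1 p₀.2 hp2
  have hμ : ∀ H ∈ Dgrad xs, ∀ ξ : E, μ * ‖ξ‖ ^ 2 ≤ ⟪ξ, H ξ⟫ := by
    intro H hH ξ
    rcases eq_or_ne ξ 0 with rfl | hξ
    · simp
    · have hn : ‖ξ‖ ≠ 0 := norm_ne_zero_iff.mpr hξ
      set u : E := ‖ξ‖⁻¹ • ξ with hu
      have hus : u ∈ Metric.sphere (0 : E) 1 := by
        simp [hu, norm_smul, abs_of_nonneg (norm_nonneg ξ), inv_mul_cancel₀ hn]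
      have := hp₀min (Set.mk_mem_prod hH hus)
      have h2 : μ ≤ ⟪u, H u⟫ := this
      have hexp : ⟪u, H u⟫ = (‖ξ‖⁻¹)^2 * ⟪ξ, H ξ⟫ := by
        simp [hu, map_smul, inner_smul_left, inner_smul_right, sq]
        ring
      rw [hexp] at h2
      have hξ2 : (0:ℝ) < ‖ξ‖ ^ 2 := by positivity
      calc μ * ‖ξ‖ ^ 2 ≤ ((‖ξ‖⁻¹)^2 * ⟪ξ, H ξ⟫) * ‖ξ‖ ^ 2 := by
            exact mul_le_mul_of_nonneg_right h2 hξ2.le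
        _ = ⟪ξ, H ξ⟫ := by field_simp
  obtain ⟨δ, hδpos, hδ⟩ := husc (μ / 2) (by linarith)
  refine ⟨Metric.ball xs (min δ δT), Metric.ball_mem_nhds xs (lt_min hδpos hδT), ?_⟩
  intro x hx hgx
  have hxδT : x ∈ Metric.ball xs δT := Metric.ball_subset_ball (min_le_right δ δT) hx
  obtain ⟨y, H, hH, v, hdy, hv, hgv⟩ := hTaylor x hxδT
  rcases eq_or_ne v 0 with rfl | hvne
  · have : dist xs x = 0 := by rw [← hv, norm_zero]
    exact eq_of_dist_eq_zero (by rwa [dist_comm] at this)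
  · exfalso
    have hyball : y ∈ Metric.ball xs δ := by
      have hxd : dist xs x < δ := lt_of_lt_of_le (by rwa [Metric.mem_ball, dist_comm] at hx)
        (min_le_left δ δT)
      exact Metric.mem_ball.mpr (by rw [dist_comm]; exact lt_of_le_of_lt hdy hxd)
    obtain ⟨H', hH', hHH'⟩ := hδ y hyball H hH
    have hHv0 : ‖H v‖ = 0 := by rw [← hgv, hgx, norm_zero]
    have h1 : ⟪v, H v⟫ ≤ ‖v‖ * ‖H v‖ := real_inner_le_norm v (H v)
    have h2 : μ * ‖v‖ ^ 2 ≤ ⟪v, H' v⟫ := hμ H' hH' v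
    have h3 : |⟪v, (H - H') v⟫| ≤ (μ / 2) * ‖v‖ ^ 2 := by
      calc |⟪v, (H - H') v⟫| ≤ ‖v‖ * ‖(H - H') v‖ := abs_real_inner_le_norm _ _
        _ ≤ ‖v‖ * (‖H - H'‖ * ‖v‖) := by
            exact mul_le_mul_of_nonneg_left ((H - H').le_opNorm v) (norm_nonneg v)
        _ ≤ ‖v‖ * ((μ / 2) * ‖v‖) := by
            have := mul_le_mul_of_nonneg_right hHH' (norm_nonneg v)
            exact mul_le_mul_of_nonneg_left this (norm_nonneg v)
        _ = (μ / 2) * ‖v‖ ^ 2 := by ring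
    have hsplit : ⟪v, H v⟫ = ⟪v, H' v⟫ + ⟪v, (H - H') v⟫ := by
      simp [ContinuousLinearMap.sub_apply, inner_sub_right]
    have hlow : (μ / 2) * ‖v‖ ^ 2 ≤ ⟪v, H v⟫ := by
      have := abs_le.mp h3
      rw [hsplit]; linarith
    have hn2 : (0:ℝ) < ‖v‖ ^ 2 := by
      have := norm_pos_iff.mpr hvne; positivity
    have : ⟪v, H v⟫ ≤ 0 := by rw [hHv0] at h1; simpa using h1
    nlinarith
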